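/- arXiv:1508.07228 — 2 statements merged into one kernel-verified Lean document; each statement's English description precedes it below -/
import Mathlib

section
/- Let G be a nontrivial finite simple group. Then the character graph Γ(G) associated with codegrees is a complete graph; that is, for any two nonprincipal irreducible complex characters θ and ψ of G (not necessarily distinct), gcd(a(θ), a(ψ)) ≠ 1. -/
open CategoryTheory

section AuxEigen
open CategoryTheory Module Polynomial

lemma trace_restrict_smul_eq {M : Type} [AddCommGroup M] [Module ℂ M] [FiniteDimensional ℂ M]
    (N : Submodule ℂ M) (c : ℂ) (φ : Module.End ℂ M) (hm : Set.MapsTo φ N N)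
    (h : ∀ x ∈ N, φ x = c • x) :
    LinearMap.trace ℂ N (φ.restrict hm) = c * finrank ℂ N := by
  have : φ.restrict hm = c • (1 : Module.End ℂ N) := by
    refine LinearMap.ext fun x => Subtype.ext ?_
    exact (h x x.2).trans (by simp)
  rw [this, map_smul, LinearMap.trace_one, smul_eq_mul]

lemma FDRep.exists_eigen_data {G : Type} [Group G] [Finite G] (V : FDRep ℂ G) (g : G) :
    ∃ (s : Finset ℂ) (m : ℂ → ℕ),
      (∀ μ ∈ s, μ ^ orderOf g = 1) ∧
      V.character g = ∑ μ ∈ s, (m μ : ℂ) * μ ∧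
      V.character g⁻¹ = ∑ μ ∈ s, (m μ : ℂ) * μ⁻¹ ∧
      (finrank ℂ V : ℂ) = ∑ μ ∈ s, (m μ : ℂ) := by
  classical
  set n := orderOf g with hn
  have hn0 : n ≠ 0 := (orderOf_pos g).ne'
  set f : Module.End ℂ V := V.ρ g with hf
  have hfn : f ^ n = 1 := by rw [hf, ← map_pow, hn, pow_orderOf_eq_one, map_one]
  have hroot : ∀ μ : ℂ, f.eigenspace μ ≠ ⊥ → μ ^ n = 1 := by
    intro μ hμ
    obtain ⟨v, hv⟩ := Module.End.HasEigenvalue.exists_hasEigenvector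
      (Module.End.hasEigenvalue_iff.mpr hμ)
    have h1 : (f ^ n) v = μ ^ n • v := hv.pow_apply n
    rw [hfn] at h1
    have h2 : (μ ^ n - 1) • v = 0 := by
      rw [sub_smul, one_smul, ← h1]
      simp
    rcases smul_eq_zero.mp h2 with h | h
    · exact sub_eq_zero.mp h
    · exact absurd h hv.2
  have hsq : Squarefree (X ^ n - C (1 : ℂ)) :=
    (Polynomial.separable_X_pow_sub_C (1 : ℂ) (Nat.cast_ne_zero.mpr hn0) one_ne_zero).squarefree
  have haev : Polynomial.aeval f (X ^ n - C (1 : ℂ)) = 0 := by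
    simp [hfn]
  have hss := Module.End.isSemisimple_of_squarefree_aeval_eq_zero hsq haev
  have htop : ⨆ μ, f.eigenspace μ = ⊤ := by
    have h := Module.End.iSup_maxGenEigenspace_eq_top f
    simpa [hss.isFinitelySemisimple.maxGenEigenspace_eq_eigenspace] using h
  have hint : DirectSum.IsInternal f.eigenspace :=
    DirectSum.isInternal_submodule_of_iSupIndep_of_iSup_eq_top f.eigenspaces_iSupIndep htop
  have hfin : {μ : ℂ | f.eigenspace μ ≠ ⊥}.Finite := by
    have hsub : {μ : ℂ | f.eigenspace μ ≠ ⊥} ⊆ (X ^ n - C (1 : ℂ)).rootSet ℂ := by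
      intro μ hμ
      rw [Polynomial.mem_rootSet]
      exact ⟨(monic_X_pow_sub_C (1 : ℂ) hn0).ne_zero, by simp [hroot μ hμ]⟩
    exact Set.Finite.subset (Polynomial.rootSet_finite _ _) hsub
  have hmf : ∀ μ : ℂ, Set.MapsTo f (f.eigenspace μ) (f.eigenspace μ) := by
    intro μ x hx
    have h1 := Module.End.mem_eigenspace_iff.mp hx
    exact Module.End.mem_eigenspace_iff.mpr (by rw [h1, map_smul, h1])
  set f' : Module.End ℂ V := V.ρ g⁻¹ with hf'
  have hff' : ∀ x : V, f' (f x) = x := by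
    intro x
    have h4 : f' * f = 1 := by rw [hf, hf', ← map_mul, inv_mul_cancel, map_one]
    calc f' (f x) = (f' * f) x := rfl
    _ = x := by rw [h4]; rfl
  have hval : ∀ μ : ℂ, μ ≠ 0 → ∀ x ∈ f.eigenspace μ, f' x = μ⁻¹ • x := by
    intro μ hμ0 x hx
    have h1 := Module.End.mem_eigenspace_iff.mp hx
    have h2 : μ • f' x = x := by
      have h3 := hff' x
      rw [h1] at h3
      rwa [map_smul] at h3
    have h5 : μ⁻¹ • (μ • f' x) = f' x := by rw [smul_smul, inv_mul_cancel₀ hμ0, one_smul]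
    rw [← h5, h2]
  have hmf' : ∀ μ : ℂ, Set.MapsTo f' (f.eigenspace μ) (f.eigenspace μ) := by
    intro μ x hx
    by_cases hb : f.eigenspace μ = ⊥
    · have hx0 : x = 0 := by simpa [hb] using hx
      simp [hx0]
    · have hμ0 : μ ≠ 0 := by
        intro h0
        have := hroot μ hb
        rw [h0, zero_pow hn0] at this
        exact zero_ne_one this
      rw [hval μ hμ0 x hx]
      exact Submodule.smul_mem _ _ hx
  have hm1 : ∀ μ : ℂ, Set.MapsTo (1 : Module.End ℂ V) (f.eigenspace μ) (f.eigenspace μ) :=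
    fun μ x hx => hx
  refine ⟨hfin.toFinset, fun μ => finrank ℂ (f.eigenspace μ), ?_, ?_, ?_, ?_⟩
  · intro μ hμ
    exact hroot μ (by simpa using hμ)
  · have h := LinearMap.trace_eq_sum_trace_restrict' hint hfin hmf
    calc V.character g = LinearMap.trace ℂ V f := rfl
    _ = ∑ μ ∈ hfin.toFinset, (finrank ℂ (f.eigenspace μ) : ℂ) * μ := by
        rw [h]
        refine Finset.sum_congr rfl fun μ hμ => ?_
        rw [trace_restrict_smul_eq _ μ f (hmf μ)
          (fun x hx => Module.End.mem_eigenspace_iff.mp hx)]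
        ring
  · have h := LinearMap.trace_eq_sum_trace_restrict' hint hfin hmf'
    calc V.character g⁻¹ = LinearMap.trace ℂ V f' := rfl
    _ = ∑ μ ∈ hfin.toFinset, (finrank ℂ (f.eigenspace μ) : ℂ) * μ⁻¹ := by
        rw [h]
        refine Finset.sum_congr rfl fun μ hμ => ?_
        have hμb : f.eigenspace μ ≠ ⊥ := by simpa using hμ
        have hμ0 : μ ≠ 0 := by
          intro h0
          have := hroot μ hμb
          rw [h0, zero_pow hn0] at this
          exact zero_ne_one this
        rw [trace_restrict_smul_eq _ μ⁻¹ f' (hmf' μ) (hval μ hμ0)]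
        ring
  · have h := LinearMap.trace_eq_sum_trace_restrict' hint hfin hm1
    calc (finrank ℂ V : ℂ) = LinearMap.trace ℂ V 1 := (LinearMap.trace_one ℂ _).symm
    _ = ∑ μ ∈ hfin.toFinset, (finrank ℂ (f.eigenspace μ) : ℂ) := by
        rw [h]
        refine Finset.sum_congr rfl fun μ hμ => ?_
        rw [trace_restrict_smul_eq _ 1 1 (hm1 μ) (fun x hx => (one_smul ℂ x).symm)]
        ring

section Derived
variable {G : Type} [Group G] [Finite G] (V : FDRep ℂ G)

private lemma real_pow_eq_one {x : ℝ} (h0 : 0 ≤ x) {n : ℕ} (hn : n ≠ 0) (h : x ^ n = 1) :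
    x = 1 := by
  rcases lt_trichotomy x 1 with h1 | h1 | h1
  · have := pow_lt_one₀ h0 h1 hn
    linarith
  · exact h1
  · have := one_lt_pow₀ h1 hn
    linarith

private lemma conj_eq_inv_of_pow_eq_one {μ : ℂ} {n : ℕ} (hn : n ≠ 0) (h : μ ^ n = 1) :
    (starRingEnd ℂ) μ = μ⁻¹ := by
  have habs : ‖μ‖ = 1 := by
    apply real_pow_eq_one (norm_nonneg μ) hn
    rw [← norm_pow, h, norm_one]
  symm
  apply inv_eq_of_mul_eq_one_right
  rw [Complex.mul_conj, Complex.normSq_eq_norm_sq, habs]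
  norm_num

lemma FDRep.char_inv_eq_conj (g : G) :
    V.character g⁻¹ = (starRingEnd ℂ) (V.character g) := by
  obtain ⟨s, m, hpow, hg, hginv, _⟩ := FDRep.exists_eigen_data V g
  have hn : orderOf g ≠ 0 := (orderOf_pos g).ne'
  rw [hg, hginv, map_sum]
  refine Finset.sum_congr rfl fun μ hμ => ?_
  rw [map_mul, conj_eq_inv_of_pow_eq_one hn (hpow μ hμ)]
  simp

lemma FDRep.abs_char_le (g : G) :
    ‖V.character g‖ ≤ (finrank ℂ V : ℝ) := by
  obtain ⟨s, m, hpow, hg, _, hsum⟩ := FDRep.exists_eigen_data V g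
  have hn : orderOf g ≠ 0 := (orderOf_pos g).ne'
  rw [hg]
  calc ‖∑ μ ∈ s, (m μ : ℂ) * μ‖ ≤ ∑ μ ∈ s, ‖(m μ : ℂ) * μ‖ :=
        norm_sum_le _ _
  _ = ∑ μ ∈ s, (m μ : ℝ) := by
      refine Finset.sum_congr rfl fun μ hμ => ?_
      have habs : ‖μ‖ = 1 := by
        apply real_pow_eq_one (norm_nonneg μ) hn
        rw [← norm_pow, hpow μ hμ, norm_one]
      rw [norm_mul, habs, mul_one, Complex.norm_natCast]
  _ = (finrank ℂ V : ℝ) := by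
      have : ((finrank ℂ V : ℕ) : ℂ) = ((∑ μ ∈ s, m μ : ℕ) : ℂ) := by
        rw [hsum]; push_cast; ring
      have h2 : (finrank ℂ V : ℕ) = ∑ μ ∈ s, m μ := Nat.cast_injective this
      rw [h2]; push_cast; ring

lemma FDRep.isIntegral_char (g : G) : IsIntegral ℤ (V.character g) := by
  obtain ⟨s, m, hpow, hg, _, _⟩ := FDRep.exists_eigen_data V g
  have hn : orderOf g ≠ 0 := (orderOf_pos g).ne'
  rw [hg]
  refine IsIntegral.sum _ fun μ hμ => IsIntegral.mul ?_ ?_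
  · have : ((m μ : ℤ) : ℂ) = algebraMap ℤ ℂ (m μ : ℤ) := by simp
    have h2 : IsIntegral ℤ (algebraMap ℤ ℂ (m μ : ℤ)) := isIntegral_algebraMap
    rw [← this] at h2
    simpa using h2
  · refine ⟨X ^ orderOf g - C 1, monic_X_pow_sub_C _ hn, ?_⟩
    simp [hpow μ hμ]
end Derived
end AuxEigen
section Schur
open CategoryTheory Module Polynomial
variable {G : Type} [Group G]

lemma FDRep.exists_smul_of_comm (V : FDRep ℂ G) [Simple V]
    (T : ↥V →ₗ[ℂ] ↥V)
    (h : ∀ s : G, T ∘ₗ (V.ρ s : ↥V →ₗ[ℂ] ↥V) = (V.ρ s : ↥V →ₗ[ℂ] ↥V) ∘ₗ T) :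
    ∃ c : ℂ, T = c • LinearMap.id := by
  let η : V ⟶ V := ⟨FGModuleCat.ofHom T, fun s => by ext x; exact congrArg (fun f => f x) (h s)⟩
  obtain ⟨c, hc⟩ := endomorphism_simple_eq_smul_id ℂ η
  refine ⟨c, ?_⟩
  have : (c • 𝟙 V).hom.hom.hom = η.hom.hom.hom := by rw [hc]
  exact this.symm

variable [Fintype G]

/-- The sum over a conjugation-invariant finset commutes with the representation. -/
lemma FDRep.sum_comm_of_conj_invariant (V : FDRep ℂ G) (F : Finset G)
    (hF : ∀ s h : G, h ∈ F → s⁻¹ * h * s ∈ F) (s : G) :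
    (∑ h ∈ F, (V.ρ h : ↥V →ₗ[ℂ] ↥V)) * (V.ρ s : ↥V →ₗ[ℂ] ↥V)
      = (V.ρ s : ↥V →ₗ[ℂ] ↥V) * (∑ h ∈ F, (V.ρ h : ↥V →ₗ[ℂ] ↥V)) := by
  rw [Finset.sum_mul, Finset.mul_sum]
  have hcomp : ∀ a b : G, (V.ρ a : ↥V →ₗ[ℂ] ↥V) * (V.ρ b : ↥V →ₗ[ℂ] ↥V)
      = (V.ρ (a * b) : ↥V →ₗ[ℂ] ↥V) := fun a b => (map_mul V.ρ a b).symm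
  refine Finset.sum_bij' (fun h _ => s⁻¹ * h * s) (fun h _ => s * h * s⁻¹) ?_ ?_ ?_ ?_ ?_
  · intro h hh; exact hF s h hh
  · intro h hh
    have := hF s⁻¹ h hh
    simpa using this
  · intro h hh; group
  · intro h hh; group
  · intro h hh
    rw [hcomp, hcomp]
    congr 1
    group

/-- The trace of the sum of `ρ h` over a finset. -/
lemma FDRep.trace_sum (V : FDRep ℂ G) (F : Finset G) :
    LinearMap.trace ℂ V (∑ h ∈ F, (V.ρ h : ↥V →ₗ[ℂ] ↥V)) = ∑ h ∈ F, V.character h := by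
  rw [map_sum]; rfl

lemma FDRep.char_eq_of_isConj (V : FDRep ℂ G) {a b : G} (h : IsConj a b) :
    V.character a = V.character b := by
  obtain ⟨t, ht⟩ := isConj_iff.mp h
  rw [← ht, FDRep.char_conj]

end Schur
section Main
open CategoryTheory Module Polynomial
variable {G : Type} [Group G] [Fintype G]

lemma FDRep.sum_char_mul_eq (V : FDRep ℂ G) [Simple V] :
    ∑ g : G, V.character g * V.character g⁻¹ = (Fintype.card G : ℂ) := by
  classical
  have hN : (Fintype.card G : ℂ) ≠ 0 := Nat.cast_ne_zero.mpr Fintype.card_ne_zero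
  letI : Invertible (Nat.card G : ℂ) := invertibleOfNonzero (by rwa [Nat.card_eq_fintype_card])
  have h0 := FDRep.char_orthonormal V V
  rw [if_pos ⟨Iso.refl V⟩, Nat.card_eq_fintype_card, inv_mul_eq_iff_eq_mul₀ hN] at h0
  simpa using h0

lemma FDRep.nontrivial_of_simple (V : FDRep ℂ G) [Simple V] : Nontrivial ↥V := by
  by_contra hns
  haveI hsub : Subsingleton ↥V := not_nontrivial_iff_subsingleton.mp hns
  have hchar : ∀ g : G, V.character g = 0 := fun g => by
    have h0 : (V.ρ g : ↥V →ₗ[ℂ] ↥V) = 0 := Subsingleton.elim _ _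
    show LinearMap.trace ℂ V (V.ρ g) = 0
    rw [h0, map_zero]
  have h := FDRep.sum_char_mul_eq V
  rw [Finset.sum_eq_zero (fun g _ => by rw [hchar g, zero_mul])] at h
  exact (Nat.cast_ne_zero.mpr Fintype.card_ne_zero) h.symm

lemma FDRep.ker_eq_bot (V : FDRep ℂ G) [Simple V] [IsSimpleGroup G]
    (hV1 : V.character ≠ 1) : MonoidHom.ker V.ρ = ⊥ := by
  classical
  have hnormal : (MonoidHom.ker V.ρ).Normal := by
    constructor
    intro x hx s
    have hxx : V.ρ x = 1 := hx
    show V.ρ (s * x * s⁻¹) = 1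
    rw [map_mul, map_mul, hxx, mul_one, ← map_mul, mul_inv_cancel, map_one]
  rcases IsSimpleGroup.eq_bot_or_eq_top_of_normal _ hnormal with h | h
  · exact h
  · exfalso
    have hall : ∀ g : G, V.ρ g = 1 := fun g => by
      have hg : g ∈ MonoidHom.ker V.ρ := by rw [h]; trivial
      exact hg
    have hchar : ∀ g : G, V.character g = (finrank ℂ ↥V : ℂ) := fun g => by
      show LinearMap.trace ℂ V (V.ρ g) = _
      rw [hall g]
      exact LinearMap.trace_one ℂ _
    have hsum := FDRep.sum_char_mul_eq V
    rw [Finset.sum_congr rfl (fun g (_ : g ∈ Finset.univ) => by rw [hchar g, hchar g⁻¹])] at hsum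
    rw [Finset.sum_const, Finset.card_univ, nsmul_eq_mul] at hsum
    have hNne : (Fintype.card G : ℂ) ≠ 0 := Nat.cast_ne_zero.mpr Fintype.card_ne_zero
    have hdd : (finrank ℂ ↥V : ℂ) * (finrank ℂ ↥V : ℂ) = 1 := by
      have := mul_left_cancel₀ hNne (hsum.trans (mul_one (Fintype.card G : ℂ)).symm)
      exact this
    have hdd' : finrank ℂ ↥V * finrank ℂ ↥V = 1 := by exact_mod_cast hdd
    have hd1 : finrank ℂ ↥V = 1 := by nlinarith [hdd']
    apply hV1
    funext g
    show V.character g = 1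
    rw [hchar g, hd1]
    norm_num

lemma FDRep.sum_char_eq_zero (V : FDRep ℂ G) [Simple V] [IsSimpleGroup G]
    (hV1 : V.character ≠ 1) : ∑ g : G, V.character g = 0 := by
  classical
  set P := ∑ s : G, (V.ρ s : ↥V →ₗ[ℂ] ↥V) with hP
  have hcomm : ∀ s : G, P ∘ₗ (V.ρ s : ↥V →ₗ[ℂ] ↥V) = (V.ρ s : ↥V →ₗ[ℂ] ↥V) ∘ₗ P := fun s => by
    rw [← Module.End.mul_eq_comp, ← Module.End.mul_eq_comp, hP]
    exact FDRep.sum_comm_of_conj_invariant V Finset.univ (fun _ _ _ => Finset.mem_univ _) s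
  obtain ⟨c, hc⟩ := FDRep.exists_smul_of_comm V P hcomm
  have hPabsorb : ∀ s : G, (V.ρ s : ↥V →ₗ[ℂ] ↥V) * P = P := fun s => by
    rw [hP, Finset.mul_sum]
    refine Fintype.sum_bijective (Equiv.mulLeft s) (Equiv.bijective _) _ _ fun t => ?_
    exact (map_mul V.ρ s t).symm
  have hc0 : c = 0 := by
    by_contra hcne
    have hall : ∀ s : G, (V.ρ s : ↥V →ₗ[ℂ] ↥V) = LinearMap.id := fun s => by
      have h1 := hPabsorb s
      rw [hc, mul_smul_comm, Module.End.mul_eq_comp, LinearMap.comp_id] at h1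
      exact smul_right_injective _ hcne h1
    have hker := FDRep.ker_eq_bot V hV1
    obtain ⟨g, hg⟩ := exists_ne (1 : G)
    apply hg
    have hmem : g ∈ MonoidHom.ker V.ρ := by
      show V.ρ g = 1
      rw [show (1 : ↥V →ₗ[ℂ] ↥V) = LinearMap.id from rfl]
      exact hall g
    rw [hker] at hmem
    exact hmem
  have htr : LinearMap.trace ℂ V P = 0 := by rw [hc, hc0, zero_smul, map_zero]
  have h2 := FDRep.trace_sum V Finset.univ
  rw [← hP] at h2
  rw [← h2, htr]

lemma FDRep.sq_lt_card (V : FDRep ℂ G) [Simple V] [IsSimpleGroup G]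
    (hV1 : V.character ≠ 1) :
    finrank ℂ ↥V * finrank ℂ ↥V < Fintype.card G := by
  classical
  set d := finrank ℂ ↥V with hd
  have hnormSq : ∑ g : G, Complex.normSq (V.character g) = (Fintype.card G : ℝ) := by
    have h := FDRep.sum_char_mul_eq V
    rw [Finset.sum_congr rfl (fun g (_ : g ∈ Finset.univ) => by
      rw [FDRep.char_inv_eq_conj V g, Complex.mul_conj])] at h
    exact_mod_cast h
  by_contra hlt
  push_neg at hlt
  have h1 : Complex.normSq (V.character 1) = (d : ℝ) * d := by
    rw [FDRep.char_one]
    exact_mod_cast Complex.normSq_natCast d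
  have hsplit := Finset.add_sum_erase Finset.univ
    (fun g => Complex.normSq (V.character g)) (Finset.mem_univ (1 : G))
  have hNle : (Fintype.card G : ℝ) ≤ (d : ℝ) * d := by exact_mod_cast hlt
  have hnonneg : ∀ g ∈ Finset.univ.erase (1 : G), 0 ≤ Complex.normSq (V.character g) :=
    fun g _ => Complex.normSq_nonneg _
  have hle0 : ∑ g ∈ Finset.univ.erase (1 : G), Complex.normSq (V.character g) ≤ 0 := by
    have : Complex.normSq (V.character 1)
        + ∑ g ∈ Finset.univ.erase (1 : G), Complex.normSq (V.character g)
        = (Fintype.card G : ℝ) := by rw [hsplit, hnormSq]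
    rw [h1] at this
    linarith
  have hzero := (Finset.sum_eq_zero_iff_of_nonneg hnonneg).mp
    (le_antisymm hle0 (Finset.sum_nonneg hnonneg))
  have hchar0 : ∀ g ∈ Finset.univ.erase (1 : G), V.character g = 0 :=
    fun g hg => Complex.normSq_eq_zero.mp (hzero g hg)
  have hsum := FDRep.sum_char_eq_zero V hV1
  rw [← Finset.add_sum_erase Finset.univ _ (Finset.mem_univ (1 : G)),
    Finset.sum_eq_zero hchar0, add_zero, FDRep.char_one] at hsum
  have hd0 : d = 0 := by exact_mod_cast hsum
  haveI := FDRep.nontrivial_of_simple V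
  exact absurd hd0 (hd ▸ finrank_pos.ne')

end Main
section Frob
open CategoryTheory Module Polynomial
variable {G : Type} [Group G] [Fintype G]

lemma FDRep.finrank_dvd_card (V : FDRep ℂ G) [Simple V] :
    finrank ℂ ↥V ∣ Fintype.card G := by
  classical
  haveI hnt : Nontrivial ↥V := FDRep.nontrivial_of_simple V
  set d := finrank ℂ ↥V with hd
  have hd0 : 0 < d := finrank_pos
  have hdC : (d : ℂ) ≠ 0 := Nat.cast_ne_zero.mpr hd0.ne'
  set S := Algebra.adjoin ℤ (Set.range (fun s : G => (V.ρ s : ↥V →ₗ[ℂ] ↥V))) with hS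
  have hSfg : (Subalgebra.toSubmodule S).FG := by
    rw [hS, Algebra.adjoin_eq_span]
    refine Submodule.fg_span ?_
    have h1 : Submonoid.closure (Set.range fun s : G => (V.ρ s : ↥V →ₗ[ℂ] ↥V))
        = MonoidHom.mrange V.ρ := by
      rw [← MonoidHom.coe_mrange, Submonoid.closure_eq]
    rw [h1, MonoidHom.coe_mrange]
    exact Set.finite_range _
  have hIntS : ∀ T : ↥V →ₗ[ℂ] ↥V, T ∈ S → IsIntegral ℤ T := fun T hT =>
    IsIntegral.of_mem_of_fg S hSfg T hT
  have hinj : Function.Injective (algebraMap ℂ (Module.End ℂ ↥V)) := by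
    intro a b hab
    obtain ⟨x, hx⟩ := exists_ne (0 : ↥V)
    have := congrArg (fun φ : Module.End ℂ ↥V => φ x) hab
    simp only [Module.algebraMap_end_apply] at this
    exact smul_left_injective ℂ hx this
  have hout : ∀ c : ConjClasses G, ConjClasses.mk (Quotient.out c) = c := fun c => by
    rw [← ConjClasses.quotient_mk_eq_mk]
    exact Quotient.out_eq c
  have hscalar : ∀ c : ConjClasses G, ∃ ω : ℂ, IsIntegral ℤ ω ∧
      ((Finset.univ.filter (fun h : G => ConjClasses.mk h = c)).card : ℂ)
          * V.character (Quotient.out c) = ω * d := by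
    intro c
    set F := Finset.univ.filter (fun h : G => ConjClasses.mk h = c) with hF
    have hFinv : ∀ s h : G, h ∈ F → s⁻¹ * h * s ∈ F := by
      intro s h hh
      simp only [hF, Finset.mem_filter, Finset.mem_univ, true_and] at hh ⊢
      rw [← hh, ConjClasses.mk_eq_mk_iff_isConj]
      exact isConj_iff.mpr ⟨s, by group⟩
    set T := ∑ h ∈ F, (V.ρ h : ↥V →ₗ[ℂ] ↥V) with hT
    obtain ⟨ω, hω⟩ := FDRep.exists_smul_of_comm V T (fun s => by
      rw [← Module.End.mul_eq_comp, ← Module.End.mul_eq_comp, hT]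
      exact FDRep.sum_comm_of_conj_invariant V F hFinv s)
    refine ⟨ω, ?_, ?_⟩
    · have hTS : T ∈ S := by
        rw [hT]
        exact Subalgebra.sum_mem S fun h _ => Algebra.subset_adjoin ⟨h, rfl⟩
      have hTint := hIntS T hTS
      rw [hω, ← Module.algebraMap_end_eq_smul_id] at hTint
      exact (isIntegral_algHom_iff
        ((Algebra.ofId ℂ (Module.End ℂ ↥V)).restrictScalars ℤ) hinj).mp hTint
    · have h1 : LinearMap.trace ℂ V T = ∑ h ∈ F, V.character h := by
        rw [hT]; exact FDRep.trace_sum V F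
      have h2 : ∀ h ∈ F, V.character h = V.character (Quotient.out c) := by
        intro h hh
        simp only [hF, Finset.mem_filter, Finset.mem_univ, true_and] at hh
        refine FDRep.char_eq_of_isConj V ?_
        rw [← ConjClasses.mk_eq_mk_iff_isConj, hh, hout]
      have h3 : LinearMap.trace ℂ V T = (F.card : ℂ) * V.character (Quotient.out c) := by
        rw [h1, Finset.sum_congr rfl h2, Finset.sum_const, nsmul_eq_mul]
      have h4 : LinearMap.trace ℂ V T = ω * d := by
        rw [hω, map_smul, LinearMap.trace_id, smul_eq_mul, hd]
      rw [← h3, h4]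
  haveI : Fintype (ConjClasses G) := Fintype.ofFinite _
  set t := ∑ c : ConjClasses G, (hscalar c).choose * V.character (Quotient.out c)⁻¹ with ht
  have hinner : ∀ c : ConjClasses G,
      (∑ h : {h : G // ConjClasses.mk h = c}, V.character ↑h * V.character (↑h : G)⁻¹)
        = (d : ℂ) * ((hscalar c).choose * V.character (Quotient.out c)⁻¹) := by
    intro c
    have hval : ∀ h : {h : G // ConjClasses.mk h = c},
        V.character ↑h * V.character (↑h : G)⁻¹
          = V.character (Quotient.out c) * V.character (Quotient.out c)⁻¹ := by
      intro h
      have hconj : IsConj (↑h : G) (Quotient.out c) := by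
        rw [← ConjClasses.mk_eq_mk_iff_isConj, h.2, hout]
      have hconj' : IsConj ((↑h : G))⁻¹ (Quotient.out c)⁻¹ := by
        obtain ⟨u, hu⟩ := isConj_iff.mp hconj
        exact isConj_iff.mpr ⟨u, by rw [← hu]; group⟩
      rw [FDRep.char_eq_of_isConj V hconj, FDRep.char_eq_of_isConj V hconj']
    rw [Finset.sum_congr rfl (fun h _ => hval h), Finset.sum_const, Finset.card_univ,
      Fintype.card_subtype, nsmul_eq_mul]
    have hω := (hscalar c).choose_spec.2
    linear_combination (V.character (Quotient.out c)⁻¹) * hω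
  have htot : (Fintype.card G : ℂ) = (d : ℂ) * t := by
    have hpart := Fintype.sum_fiberwise (fun g : G => ConjClasses.mk g)
      (fun g : G => V.character g * V.character g⁻¹)
    rw [← FDRep.sum_char_mul_eq V, ← hpart,
      Finset.sum_congr rfl (fun c (_ : c ∈ Finset.univ) => hinner c), ht, Finset.mul_sum]
  have htint : IsIntegral ℤ t := by
    rw [ht]
    exact IsIntegral.sum _ fun c _ =>
      IsIntegral.mul (hscalar c).choose_spec.1 (FDRep.isIntegral_char V _)
  have hq : t = algebraMap ℚ ℂ ((Fintype.card G : ℚ) / (d : ℚ)) := by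
    have hmap : algebraMap ℚ ℂ ((Fintype.card G : ℚ) / (d : ℚ))
        = (Fintype.card G : ℂ) / (d : ℂ) := by
      push_cast
      simp [map_div₀]
    rw [hmap, eq_div_iff hdC]
    rw [htot]; ring
  have hqint : IsIntegral ℤ ((Fintype.card G : ℚ) / (d : ℚ)) := by
    rw [hq] at htint
    refine (isIntegral_algHom_iff ((Algebra.ofId ℚ ℂ).restrictScalars ℤ) ?_).mp htint
    exact fun a b hab => (algebraMap ℚ ℂ).injective hab
  obtain ⟨z, hz⟩ := IsIntegrallyClosed.isIntegral_iff.mp hqint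
  rw [eq_intCast (algebraMap ℤ ℚ) z] at hz
  have hz' : ((z : ℚ)) * (d : ℚ) = (Fintype.card G : ℚ) := by
    rw [hz, div_mul_cancel₀]
    exact Nat.cast_ne_zero.mpr hd0.ne'
  have h6 : (((d : ℤ) * z : ℤ) : ℚ) = ((Fintype.card G : ℤ) : ℚ) := by
    push_cast
    linarith [hz']
  have h7 : (d : ℤ) * z = (Fintype.card G : ℤ) := by exact_mod_cast h6
  have h8 : (d : ℤ) ∣ (Fintype.card G : ℤ) := ⟨z, h7.symm⟩
  exact_mod_cast h8
end Frob
/-- The codegree `a(χ) = |G : ker χ| / χ(1)` of the character `χ` of the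
finite-dimensional complex representation `V` of `G`. -/
noncomputable def codegree {G : Type} [Group G] (V : FDRep ℂ G) : ℕ :=
  (MonoidHom.ker V.ρ).index / Module.finrank ℂ V

/-- The character graph associated with codegrees of a finite simple group is complete:
any two nonprincipal irreducible characters have non-coprime codegrees. -/
theorem codegreeGraph_complete_of_simple {G : Type} [Group G] [Finite G] [IsSimpleGroup G]
    (V W : FDRep ℂ G) (hV : Simple V) (hW : Simple W)
    (hV1 : V.character ≠ 1) (hW1 : W.character ≠ 1) :
    Nat.gcd (codegree V) (codegree W) ≠ 1 := by
  classical
  letI : Fintype G := Fintype.ofFinite G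
  haveI := hV
  haveI := hW
  haveI := FDRep.nontrivial_of_simple V
  haveI := FDRep.nontrivial_of_simple W
  set N := Fintype.card G with hN
  set d := Module.finrank ℂ ↥V with hd
  set e := Module.finrank ℂ ↥W with he
  have hd0 : 0 < d := Module.finrank_pos
  have he0 : 0 < e := Module.finrank_pos
  have hNpos : 0 < N := Fintype.card_pos
  have hkerV := FDRep.ker_eq_bot V hV1
  have hkerW := FDRep.ker_eq_bot W hW1
  have hd2 : d * d < N := FDRep.sq_lt_card V hV1
  have he2 : e * e < N := FDRep.sq_lt_card W hW1
  have hddvd : d ∣ N := FDRep.finrank_dvd_card V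
  have hedvd : e ∣ N := FDRep.finrank_dvd_card W
  have hcodV : codegree V = N / d := by
    unfold codegree
    rw [hkerV, Subgroup.index_bot, Nat.card_eq_fintype_card]
  have hcodW : codegree W = N / e := by
    unfold codegree
    rw [hkerW, Subgroup.index_bot, Nat.card_eq_fintype_card]
  intro hcop
  rw [hcodV, hcodW] at hcop
  have hadvd : N / d ∣ N := ⟨d, (Nat.div_mul_cancel hddvd).symm⟩
  have hbdvd : N / e ∣ N := ⟨e, (Nat.div_mul_cancel hedvd).symm⟩
  have hab : (N / d) * (N / e) ∣ N :=
    Nat.Coprime.mul_dvd_of_dvd_of_dvd hcop hadvd hbdvd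
  have hle : (N / d) * (N / e) ≤ N := Nat.le_of_dvd hNpos hab
  have hde : d * e < N := by nlinarith [hd2, he2, hd0, he0]
  have key : ((N / d) * (N / e)) * (d * e) = N * N := by
    rw [mul_mul_mul_comm, Nat.div_mul_cancel hddvd, Nat.div_mul_cancel hedvd]
  have h1 : ((N / d) * (N / e)) * (d * e) ≤ N * (d * e) := Nat.mul_le_mul_right _ hle
  rw [key] at h1
  have h2 : N * (d * e) < N * N := by
    exact mul_lt_mul_of_pos_left hde hNpos
  exact absurd (h1.trans_lt h2) (lt_irrefl _)
end

section
/- Let G be a nontrivial finite abelian group whose character graph associated with codegrees has no triangles. Then G is cyclic of order 2 or cyclic of order 3. -/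
open CategoryTheory

/-- The character graph of `G` associated with codegrees: vertices are the nonprincipal
irreducible complex characters of `G`, two distinct characters being adjacent iff their
codegrees are not coprime. -/
def codegreeGraph (G : Type) [Group G] :
    SimpleGraph {χ : G → ℂ // (∃ V : FDRep ℂ G, Simple V ∧ V.character = χ) ∧ χ ≠ 1} where
  Adj χ ψ := χ ≠ ψ ∧ ∃ V W : FDRep ℂ G, Simple V ∧ Simple W ∧
    V.character = χ.1 ∧ W.character = ψ.1 ∧ Nat.gcd (codegree V) (codegree W) ≠ 1
  symm := ⟨fun χ ψ ⟨hne, V, W, hV, hW, hVχ, hWψ, h⟩ =>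
    ⟨hne.symm, W, V, hW, hV, hWψ, hVχ, by rwa [Nat.gcd_comm]⟩⟩
  loopless := ⟨fun χ h => h.1 rfl⟩

namespace CodegreeAux


variable {G : Type} [Group G]

/-- One-dimensional representation attached to `χ : G →* ℂˣ`. -/
noncomputable def linRep (χ : G →* ℂˣ) : Representation ℂ G ℂ where
  toFun g := (χ g : ℂ) • LinearMap.id
  map_one' := by simp; rfl
  map_mul' g h := by
    refine LinearMap.ext fun x => ?_
    show (↑(χ (g * h)) : ℂ) * x = (χ g : ℂ) * ((χ h : ℂ) * x)
    simp [mul_assoc]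

noncomputable def linFDRep (χ : G →* ℂˣ) : FDRep ℂ G := FDRep.of (linRep χ)

theorem finrank_linFDRep (χ : G →* ℂˣ) : Module.finrank ℂ (linFDRep χ) = 1 :=
  Module.finrank_self ℂ

theorem char_linFDRep (χ : G →* ℂˣ) :
    (linFDRep χ).character = fun g => (χ g : ℂ) := by
  funext g
  show LinearMap.trace ℂ ℂ ((χ g : ℂ) • LinearMap.id) = (χ g : ℂ)
  rw [map_smul, LinearMap.trace_id]
  simp [Module.finrank_self]

theorem ker_linFDRep (χ : G →* ℂˣ) :
    MonoidHom.ker (linFDRep χ).ρ = MonoidHom.ker χ := by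
  ext g
  simp only [MonoidHom.mem_ker]
  constructor
  · intro hg
    have h1 : ((linFDRep χ).ρ g) (1 : ℂ) = (1 : ℂ) := by rw [hg]; rfl
    have h2 : (χ g : ℂ) = 1 := by
      have : (χ g : ℂ) * 1 = 1 := h1
      simpa using this
    exact Units.ext h2
  · intro hg
    show (χ g : ℂ) • LinearMap.id = _
    rw [hg]
    show (1 : ℂ) • LinearMap.id = _
    rw [one_smul]
    rfl

theorem codegree_linFDRep (χ : G →* ℂˣ) :
    codegree (linFDRep χ) = (MonoidHom.ker χ).index := by
  rw [codegree, ker_linFDRep, finrank_linFDRep, Nat.div_one]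



variable {G : Type} [Group G]

theorem simple_of_finrank_one (V : FDRep ℂ G) (hV : Module.finrank ℂ V = 1) :
    Simple V := by
  constructor
  intro Y f hf
  constructor
  · intro hiso h0
    have h2 : inv f ≫ f = inv f ≫ 0 := congrArg (fun g => inv f ≫ g) h0
    have h1 : 𝟙 V = (0 : V ⟶ V) :=
      (IsIso.inv_hom_id f).symm.trans (h2.trans Limits.comp_zero)
    have hS : Subsingleton V := by
      refine ⟨fun a b => ?_⟩
      have ha : (𝟙 V : V ⟶ V).hom a = (0 : V ⟶ V).hom a := by rw [h1]
      have hb : (𝟙 V : V ⟶ V).hom b = (0 : V ⟶ V).hom b := by rw [h1]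
      simpa using ha.trans hb.symm
    rw [Module.finrank_zero_of_subsingleton] at hV
    exact one_ne_zero hV.symm
  · intro hne
    have hcomm : ∀ (g : G) (y : Y), f.hom (Y.ρ g y) = V.ρ g (f.hom y) := fun g y =>
      LinearMap.congr_fun (congrArg (fun φ => φ.hom.hom) (f.comm g)) y
    set K := LinearMap.ker f.hom.hom.hom with hKdef
    have hinv : ∀ g : G, ∀ x ∈ K, Y.ρ g x ∈ K := by
      intro g x hx
      have hx0 : f.hom x = 0 := hx
      have : f.hom (Y.ρ g x) = 0 := by rw [hcomm, hx0, map_zero]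
      exact this
    let ρK : Representation ℂ G K :=
      { toFun := fun g => (Y.ρ g).restrict (hinv g)
        map_one' := by
          refine LinearMap.ext fun x => Subtype.ext ?_
          simp [LinearMap.restrict_coe_apply]
        map_mul' := fun g h => by
          refine LinearMap.ext fun x => Subtype.ext ?_
          show Y.ρ (g * h) x.1 = Y.ρ g (Y.ρ h x.1)
          rw [map_mul]
          rfl }
    let W : FDRep ℂ G := FDRep.of ρK
    let ι : W ⟶ Y := ⟨FGModuleCat.ofHom K.subtype, fun g => rfl⟩
    have hι0 : ι = 0 := by
      rw [← cancel_mono f]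
      apply Action.Hom.ext
      apply FGModuleCat.hom_ext
      refine LinearMap.ext fun (x : K) => ?_
      have hx : f.hom x.1 = 0 := x.2
      exact hx.trans (map_zero f.hom.hom.hom).symm
    have hker : ∀ x : K, x.1 = 0 := by
      intro x
      have h3 := congrArg (fun (φ : W ⟶ Y) => φ.hom x) hι0
      exact h3
    have hinj : Function.Injective f.hom := by
      rw [← LinearMap.ker_eq_bot, Submodule.eq_bot_iff]
      exact fun x hx => hker ⟨x, hx⟩
    have hr0 : LinearMap.range f.hom.hom.hom ≠ ⊥ := by
      intro hbot
      exact hne (Action.Hom.ext (FGModuleCat.hom_ext (LinearMap.range_eq_bot.mp hbot)))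
    have hr1 : Module.finrank ℂ (LinearMap.range f.hom.hom.hom) = 1 := by
      refine le_antisymm (hV ▸ Submodule.finrank_le _) ?_
      rw [Nat.one_le_iff_ne_zero, ne_eq, Submodule.finrank_eq_zero]
      exact hr0
    have hsurj : Function.Surjective f.hom := by
      rw [← LinearMap.range_eq_top]
      exact Submodule.eq_top_of_finrank_eq (hr1.trans hV.symm)
    let e := LinearEquiv.ofBijective f.hom.hom.hom ⟨hinj, hsurj⟩
    have hcomm' : ∀ (g : G) (x : V), e.symm (V.ρ g x) = Y.ρ g (e.symm x) := by
      intro g x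
      apply hinj
      have h1 : ∀ y, f.hom (e.symm y) = y := fun y => e.apply_symm_apply y
      rw [h1, hcomm, h1]
    let ginv : V ⟶ Y := ⟨FGModuleCat.ofHom e.symm.toLinearMap, fun g => FGModuleCat.hom_ext (LinearMap.ext fun x => hcomm' g x)⟩
    refine ⟨⟨ginv, ?_, ?_⟩⟩
    · apply Action.Hom.ext
      apply FGModuleCat.hom_ext
      refine LinearMap.ext fun x => ?_
      exact e.symm_apply_apply x
    · apply Action.Hom.ext
      apply FGModuleCat.hom_ext
      refine LinearMap.ext fun x => ?_
      exact e.apply_symm_apply x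



theorem orderOf_dvd_index_ker {G : Type} [Group G] [Finite G] (χ : G →* ℂˣ) :
    orderOf χ ∣ (MonoidHom.ker χ).index := by
  rw [Subgroup.index_ker]
  have : Finite χ.range := Set.Finite.to_subtype (Set.finite_range χ)
  apply orderOf_dvd_of_pow_eq_one
  ext g
  have h1 : (⟨χ g, g, rfl⟩ : χ.range) ^ Nat.card χ.range = 1 := pow_card_eq_one'
  have h2 : χ g ^ Nat.card χ.range = (1 : ℂˣ) := by
    have h3 := congrArg (Subtype.val) h1
    simpa using h3
  exact_mod_cast h2

/-- Three distinct nontrivial elements with pairwise non-coprime orders. -/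
theorem exists_three {G : Type} [CommGroup G] [Finite G] (h4 : 4 ≤ Nat.card G) :
    ∃ x y z : G, x ≠ 1 ∧ y ≠ 1 ∧ z ≠ 1 ∧ x ≠ y ∧ x ≠ z ∧ y ≠ z ∧
      Nat.gcd (orderOf x) (orderOf y) ≠ 1 ∧ Nat.gcd (orderOf x) (orderOf z) ≠ 1 ∧
      Nat.gcd (orderOf y) (orderOf z) ≠ 1 := by
  classical
  have hn1 : Nat.card G ≠ 1 := by omega
  set p := (Nat.card G).minFac with hp
  have hpp : p.Prime := Nat.minFac_prime hn1
  haveI : Fact p.Prime := ⟨hpp⟩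
  have hpdvd : p ∣ Nat.card G := Nat.minFac_dvd _
  obtain ⟨P⟩ : Nonempty (Sylow p G) := Sylow.nonempty
  have hcardP : Nat.card P = p ^ (Nat.card G).factorization p := P.card_eq_multiplicity
  have hk1 : 1 ≤ (Nat.card G).factorization p :=
    (Nat.Prime.factorization_pos_of_dvd hpp (by positivity) hpdvd)
  have hpdvdP : p ∣ Nat.card P := by
    rw [hcardP]
    exact dvd_pow_self p (by omega)
  -- every nontrivial element of P has order divisible by p
  have hord : ∀ x : P, x ≠ 1 → p ∣ orderOf (x : G) := by
    intro x hx
    have h1 : orderOf x ∣ p ^ (Nat.card G).factorization p := hcardP ▸ orderOf_dvd_natCard x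
    obtain ⟨j, hj, hje⟩ := (Nat.dvd_prime_pow hpp).mp h1
    have hj0 : j ≠ 0 := by
      intro h0
      rw [h0, pow_zero, orderOf_eq_one_iff] at hje
      exact hx hje
    rw [Subgroup.orderOf_coe, hje]
    exact dvd_pow_self p hj0
  by_cases h4P : 4 ≤ Nat.card P
  · -- three distinct nontrivial elements of P
    haveI : Fintype P := Fintype.ofFinite P
    have hcard : 3 ≤ (Finset.univ.erase (1 : P)).card := by
      rw [Finset.card_erase_of_mem (Finset.mem_univ _), Finset.card_univ,
        ← Nat.card_eq_fintype_card]
      have h5 : Nat.card (↥P) = Nat.card (↥(P : Subgroup G)) := rfl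
      omega
    obtain ⟨t, hts, htc⟩ := Finset.exists_subset_card_eq hcard
    obtain ⟨x, y, z, hxy, hxz, hyz, ht⟩ := Finset.card_eq_three.mp htc
    have hmem : ∀ w : P, w ∈ t → w ≠ 1 := fun w hw =>
      Finset.ne_of_mem_erase (hts hw)
    have hx1 : x ≠ 1 := hmem x (ht ▸ by simp)
    have hy1 : y ≠ 1 := hmem y (ht ▸ by simp)
    have hz1 : z ≠ 1 := hmem z (ht ▸ by simp)
    have hgcd : ∀ a b : P, a ≠ 1 → b ≠ 1 →
        Nat.gcd (orderOf (a : G)) (orderOf (b : G)) ≠ 1 := by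
      intro a b ha hb hone
      have := Nat.dvd_gcd (hord a ha) (hord b hb)
      rw [hone] at this
      exact hpp.one_lt.ne' (Nat.dvd_one.mp this)
    refine ⟨x, y, z, ?_, ?_, ?_, ?_, ?_, ?_, hgcd x y hx1 hy1, hgcd x z hx1 hz1,
      hgcd y z hy1 hz1⟩
    · simpa using hx1
    · simpa using hy1
    · simpa using hz1
    · simpa using hxy
    · simpa using hxz
    · simpa using hyz
  · -- card P ∈ {2,3}, so card P = p and there is another prime
    have hPle : Nat.card P ≤ 3 := by omega
    have hcardPp : Nat.card P = p := by
      rw [hcardP]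
      have hk : (Nat.card G).factorization p = 1 := by
        by_contra hk
        have h2k : 2 ≤ (Nat.card G).factorization p := by omega
        have : p ^ 2 ≤ p ^ (Nat.card G).factorization p :=
          Nat.pow_le_pow_right hpp.pos h2k
        have h4p : 4 ≤ p ^ 2 := by nlinarith [hpp.two_le]
        rw [hcardP] at hPle
        omega
      rw [hk, pow_one]
    have hmul : Nat.card P * (P : Subgroup G).index = Nat.card G :=
      Subgroup.card_mul_index _
    set m := (P : Subgroup G).index with hm
    have hpm : ¬ p ∣ m := P.not_dvd_index
    have hm1 : m ≠ 1 := by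
      intro h1
      rw [h1, mul_one, hcardPp] at hmul
      have := hpp.two_le
      have hple : p ≤ 3 := by omega
      omega
    set q := m.minFac with hq
    have hqq : q.Prime := Nat.minFac_prime hm1
    haveI : Fact q.Prime := ⟨hqq⟩
    have hqm : q ∣ m := Nat.minFac_dvd m
    have hqG : q ∣ Nat.card G := hqm.trans (Dvd.intro_left _ hmul)
    have hpq : p ≠ q := fun h => hpm (h ▸ hqm)
    obtain ⟨a, ha⟩ := exists_prime_orderOf_dvd_card' p hpdvd
    obtain ⟨b, hb⟩ := exists_prime_orderOf_dvd_card' q hqG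
    have hcop : Nat.Coprime (orderOf a) (orderOf b) := by
      rw [ha, hb]
      exact (Nat.coprime_primes hpp hqq).mpr hpq
    have hab : orderOf (a * b) = p * q := by
      rw [(Commute.all a b).orderOf_mul_eq_mul_orderOf_of_coprime hcop, ha, hb]
    have hpq2 : 2 ≤ p := hpp.two_le
    have hq2 : 2 ≤ q := hqq.two_le
    refine ⟨a * b, (a * b)⁻¹, a, ?_, ?_, ?_, ?_, ?_, ?_, ?_, ?_, ?_⟩
    · intro h1; rw [h1, orderOf_one] at hab; nlinarith
    · intro h1
      rw [inv_eq_one] at h1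
      rw [h1, orderOf_one] at hab; nlinarith
    · intro h1; rw [h1, orderOf_one] at ha; omega
    · intro h1
      have h2 : (a * b) ^ 2 = 1 := by
        rw [pow_two]; nth_rewrite 2 [h1]; rw [mul_inv_cancel]
      have := orderOf_dvd_of_pow_eq_one h2
      rw [hab] at this
      have := Nat.le_of_dvd (by omega) this
      nlinarith
    · intro h1
      rw [h1] at hab
      rw [ha] at hab
      nlinarith
    · intro h1
      have : orderOf ((a*b)⁻¹) = orderOf a := by rw [h1]
      rw [orderOf_inv, hab, ha] at this
      nlinarith
    · rw [orderOf_inv, hab, Nat.gcd_self]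
      nlinarith
    · rw [hab, ha]
      intro h1
      have hp1 : p = 1 := Nat.dvd_one.mp (h1 ▸ Nat.dvd_gcd (Dvd.intro q rfl) dvd_rfl)
      omega
    · rw [orderOf_inv, hab, ha]
      intro h1
      have hp1 : p = 1 := Nat.dvd_one.mp (h1 ▸ Nat.dvd_gcd (Dvd.intro q rfl) dvd_rfl)
      omega


end CodegreeAux

/-- A nontrivial finite abelian group whose character graph associated with codegrees has no
triangles is cyclic of order `2` or `3`. -/
theorem abelian_of_codegreeGraph_triangle_free {G : Type} [Group G] [Finite G] [Nontrivial G]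
    (hab : ∀ a b : G, a * b = b * a)
    (h : (codegreeGraph G).CliqueFree 3) :
    IsCyclic G ∧ (Nat.card G = 2 ∨ Nat.card G = 3) := by
  classical
  letI : CommGroup G := { ‹Group G› with mul_comm := hab }
  have h2 : 1 < Nat.card G := Finite.one_lt_card
  by_cases h4 : 4 ≤ Nat.card G
  · exfalso
    haveI : NeZero ((Monoid.exponent G : ℂ)) :=
      ⟨Nat.cast_ne_zero.mpr Monoid.exponent_ne_zero_of_finite⟩
    obtain ⟨e⟩ := CommGroup.monoidHom_mulEquiv_of_hasEnoughRootsOfUnity G ℂ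
    obtain ⟨x, y, z, hx1, hy1, hz1, hxy, hxz, hyz, gxy, gxz, gyz⟩ :=
      CodegreeAux.exists_three h4
    set χ₁ := e.symm x with hχ₁
    set χ₂ := e.symm y with hχ₂
    set χ₃ := e.symm z with hχ₃
    have horder : ∀ w : G, orderOf (e.symm w) = orderOf w := fun w => e.symm.orderOf_eq w
    have hne1 : ∀ w : G, w ≠ 1 → e.symm w ≠ 1 := fun w hw h1 =>
      hw (by rwa [MulEquiv.map_eq_one_iff] at h1)
    have getp : ∀ a b : G, Nat.gcd (orderOf a) (orderOf b) ≠ 1 →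
        ∃ p : ℕ, p.Prime ∧ p ∣ orderOf a ∧ p ∣ orderOf b := by
      intro a b hg
      exact ⟨(Nat.gcd (orderOf a) (orderOf b)).minFac, Nat.minFac_prime hg,
        (Nat.minFac_dvd _).trans (Nat.gcd_dvd_left _ _),
        (Nat.minFac_dvd _).trans (Nat.gcd_dvd_right _ _)⟩
    have key : ∀ (χ ψ : G →* ℂˣ), (∃ p : ℕ, p.Prime ∧ p ∣ orderOf χ ∧ p ∣ orderOf ψ) →
        Nat.gcd (codegree (CodegreeAux.linFDRep χ)) (codegree (CodegreeAux.linFDRep ψ)) ≠ 1 := by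
      rintro χ ψ ⟨p, hp, hpχ, hpψ⟩ h1
      have d1 : p ∣ codegree (CodegreeAux.linFDRep χ) := by
        rw [CodegreeAux.codegree_linFDRep]
        exact hpχ.trans (CodegreeAux.orderOf_dvd_index_ker χ)
      have d2 : p ∣ codegree (CodegreeAux.linFDRep ψ) := by
        rw [CodegreeAux.codegree_linFDRep]
        exact hpψ.trans (CodegreeAux.orderOf_dvd_index_ker ψ)
      have hd := Nat.dvd_gcd d1 d2
      rw [h1] at hd
      exact hp.one_lt.ne' (Nat.dvd_one.mp hd)
    have mkmem : ∀ χ : G →* ℂˣ, χ ≠ 1 →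
        ((∃ V : FDRep ℂ G, Simple V ∧ V.character = fun g => (χ g : ℂ)) ∧
          (fun g => (χ g : ℂ)) ≠ (1 : G → ℂ)) := by
      intro χ hχ
      refine ⟨⟨CodegreeAux.linFDRep χ,
        CodegreeAux.simple_of_finrank_one _ (CodegreeAux.finrank_linFDRep χ),
        CodegreeAux.char_linFDRep χ⟩, ?_⟩
      intro hfun
      apply hχ
      ext g
      have hg := congrFun hfun g
      simpa using hg
    let v₁ : {χ : G → ℂ // (∃ V : FDRep ℂ G, Simple V ∧ V.character = χ) ∧ χ ≠ 1} :=
      ⟨fun g => (χ₁ g : ℂ), mkmem χ₁ (hne1 x hx1)⟩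
    let v₂ : {χ : G → ℂ // (∃ V : FDRep ℂ G, Simple V ∧ V.character = χ) ∧ χ ≠ 1} :=
      ⟨fun g => (χ₂ g : ℂ), mkmem χ₂ (hne1 y hy1)⟩
    let v₃ : {χ : G → ℂ // (∃ V : FDRep ℂ G, Simple V ∧ V.character = χ) ∧ χ ≠ 1} :=
      ⟨fun g => (χ₃ g : ℂ), mkmem χ₃ (hne1 z hz1)⟩
    have hvne : ∀ (a b : G), a ≠ b →
        (fun g => ((e.symm a) g : ℂ)) ≠ (fun g => ((e.symm b) g : ℂ)) := by
      intro a b hne hfun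
      apply hne
      have : e.symm a = e.symm b := by
        ext g
        exact congrFun hfun g
      exact e.symm.injective this
    apply h {v₁, v₂, v₃}
    rw [SimpleGraph.is3Clique_triple_iff]
    refine ⟨?_, ?_, ?_⟩
    · show _ ∧ _
      refine ⟨?_, CodegreeAux.linFDRep χ₁, CodegreeAux.linFDRep χ₂,
        CodegreeAux.simple_of_finrank_one _ (CodegreeAux.finrank_linFDRep χ₁),
        CodegreeAux.simple_of_finrank_one _ (CodegreeAux.finrank_linFDRep χ₂),
        CodegreeAux.char_linFDRep χ₁, CodegreeAux.char_linFDRep χ₂, ?_⟩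
      · intro hv
        exact hvne x y hxy (congrArg Subtype.val hv)
      · refine key χ₁ χ₂ ?_
        obtain ⟨p, hp, h1, h2⟩ := getp x y gxy
        exact ⟨p, hp, (horder x).symm ▸ h1, (horder y).symm ▸ h2⟩
    · show _ ∧ _
      refine ⟨?_, CodegreeAux.linFDRep χ₁, CodegreeAux.linFDRep χ₃,
        CodegreeAux.simple_of_finrank_one _ (CodegreeAux.finrank_linFDRep χ₁),
        CodegreeAux.simple_of_finrank_one _ (CodegreeAux.finrank_linFDRep χ₃),
        CodegreeAux.char_linFDRep χ₁, CodegreeAux.char_linFDRep χ₃, ?_⟩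
      · intro hv
        exact hvne x z hxz (congrArg Subtype.val hv)
      · refine key χ₁ χ₃ ?_
        obtain ⟨p, hp, h1, h2⟩ := getp x z gxz
        exact ⟨p, hp, (horder x).symm ▸ h1, (horder z).symm ▸ h2⟩
    · show _ ∧ _
      refine ⟨?_, CodegreeAux.linFDRep χ₂, CodegreeAux.linFDRep χ₃,
        CodegreeAux.simple_of_finrank_one _ (CodegreeAux.finrank_linFDRep χ₂),
        CodegreeAux.simple_of_finrank_one _ (CodegreeAux.finrank_linFDRep χ₃),
        CodegreeAux.char_linFDRep χ₂, CodegreeAux.char_linFDRep χ₃, ?_⟩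
      · intro hv
        exact hvne y z hyz (congrArg Subtype.val hv)
      · refine key χ₂ χ₃ ?_
        obtain ⟨p, hp, h1, h2⟩ := getp y z gyz
        exact ⟨p, hp, (horder y).symm ▸ h1, (horder z).symm ▸ h2⟩
  · have h23 : Nat.card G = 2 ∨ Nat.card G = 3 := by omega
    rcases h23 with hc | hc
    · haveI : Fact (Nat.Prime 2) := ⟨Nat.prime_two⟩
      exact ⟨isCyclic_of_prime_card hc, Or.inl hc⟩
    · haveI : Fact (Nat.Prime 3) := ⟨Nat.prime_three⟩
      exact ⟨isCyclic_of_prime_card hc, Or.inr hc⟩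
end
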